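/- arXiv:2002.01610 — 4 statements merged into one kernel-verified Lean document; each statement's English description precedes it below -/
import Mathlib

section
/- Let G be an activity-on-edge graph, let u and v be distinct vertices of G that have no outgoing task edges and have exactly the same set of outgoing neighbors, and let G' be the graph obtained from G by merging u and v into a single vertex. Then for all tasks T ≠ T', T reaches T' in G if and only if T reaches T' in G'. The symmetric statement holds when u and v have no incoming task edges and exactly the same set of incoming neighbors. -/
namespace AOEPaper

/-- An activity-on-edge graph: a directed multigraph on the vertex set `verts`,
whose task edges are indexed by the type `T` (the distinct task labels), each task `t`
being an edge from `St t` to `En t`, together with a multiset `unl` of unlabeled edges. -/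
structure AOE (V T : Type) where
  verts : Finset V
  St : T → V
  En : T → V
  stMem : ∀ t, St t ∈ verts
  enMem : ∀ t, En t ∈ verts
  unl : Multiset (V × V)
  unlMem : ∀ e ∈ unl, e.1 ∈ verts ∧ e.2 ∈ verts

/-- One-step adjacency: an unlabeled edge or a task edge from `a` to `b`. -/
def AOE.adj {V T : Type} (G : AOE V T) (a b : V) : Prop :=
  (a, b) ∈ G.unl ∨ ∃ t, G.St t = a ∧ G.En t = b

/-- The graph has no directed cycle. -/
def AOE.Acyclic {V T : Type} (G : AOE V T) : Prop :=
  ∀ v : V, ¬ Relation.TransGen G.adj v v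

/-- Task `t` reaches task `t'`: `En t = St t'` or there is a directed path from
`En t` to `St t'` (intended only for `t ≠ t'`). -/
def AOE.reach {V T : Type} (G : AOE V T) (t t' : T) : Prop :=
  Relation.ReflTransGen G.adj (G.En t) (G.St t')

/-- A sequence of tasks in which each task reaches the next. -/
def AOE.chain {V T : Type} (G : AOE V T) (l : List T) : Prop :=
  l.Chain' fun t t' => t ≠ t' ∧ G.reach t t'

/-- A potential critical path: a maximal sequence of tasks in which each task
reaches the next (not a subsequence of any other such sequence). -/
def AOE.critPath {V T : Type} (G : AOE V T) (l : List T) : Prop :=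
  G.chain l ∧ ∀ l' : List T, G.chain l' → l.Sublist l' → l' = l

/-- Two AOEs with the same task labels are equivalent if they have the same set of
potential critical paths. -/
def AOE.Equiv {V W T : Type} (G : AOE V T) (H : AOE W T) : Prop :=
  ∀ l : List T, G.critPath l ↔ H.critPath l

/-- An AOE is optimal if it minimizes the number of vertices in its equivalence class. -/
def Optimal {W T : Type} (G : AOE W T) : Prop :=
  ∀ (U : Type) (H : AOE U T), H.Acyclic → AOE.Equiv G H → G.verts.card ≤ H.verts.card

/-- The vertex map replacing `v` by `u`. -/
def mergeV {V : Type} [DecidableEq V] (u v x : V) : V := if x = v then u else x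

theorem mergeV_mem {V : Type} [DecidableEq V] {S : Finset V} (u v x : V) (hx : x ∈ S) :
    mergeV u v x ∈ insert u (S.erase v) := by
  unfold mergeV
  split_ifs with h
  · exact Finset.mem_insert_self _ _
  · exact Finset.mem_insert_of_mem (Finset.mem_erase.mpr ⟨h, hx⟩)

/-- Merge vertices `u` and `v` into the single vertex `u`. -/
def AOE.merge {V T : Type} [DecidableEq V] (G : AOE V T) (u v : V) : AOE V T where
  verts := insert u (G.verts.erase v)
  St t := mergeV u v (G.St t)
  En t := mergeV u v (G.En t)
  stMem t := mergeV_mem u v (G.St t) (G.stMem t)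
  enMem t := mergeV_mem u v (G.En t) (G.enMem t)
  unl := G.unl.map fun e => (mergeV u v e.1, mergeV u v e.2)
  unlMem := by
    intro e he
    rw [Multiset.mem_map] at he
    obtain ⟨a, ha, rfl⟩ := he
    obtain ⟨h1, h2⟩ := G.unlMem a ha
    exact ⟨mergeV_mem u v a.1 h1, mergeV_mem u v a.2 h2⟩

/-- Delete one copy of the unlabeled edge `(u, v)`. -/
def AOE.delUnl {V T : Type} [DecidableEq V] (G : AOE V T) (u v : V) : AOE V T where
  verts := G.verts
  St := G.St
  En := G.En
  stMem := G.stMem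
  enMem := G.enMem
  unl := G.unl.erase (u, v)
  unlMem := fun e he => G.unlMem e (Multiset.mem_of_mem_erase he)

/-- Rule 1 (outgoing version): `u` and `v` are distinct vertices with no outgoing task
edges and precisely the same outgoing neighbors. -/
def Rule1OutCond {V T : Type} (G : AOE V T) (u v : V) : Prop :=
  u ∈ G.verts ∧ v ∈ G.verts ∧ u ≠ v ∧
    (∀ t, G.St t ≠ u) ∧ (∀ t, G.St t ≠ v) ∧ ∀ w, G.adj u w ↔ G.adj v w

/-- Rule 1 (incoming version): `u` and `v` are distinct vertices with no incoming task
edges and precisely the same incoming neighbors. -/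
def Rule1InCond {V T : Type} (G : AOE V T) (u v : V) : Prop :=
  u ∈ G.verts ∧ v ∈ G.verts ∧ u ≠ v ∧
    (∀ t, G.En t ≠ u) ∧ (∀ t, G.En t ≠ v) ∧ ∀ w, G.adj w u ↔ G.adj w v

/-- Rule 2: `(u, v)` is an unlabeled edge and there is another directed path from `u`
to `v` not using this edge. -/
def Rule2Cond {V T : Type} [DecidableEq V] (G : AOE V T) (u v : V) : Prop :=
  (u, v) ∈ G.unl ∧ Relation.TransGen (G.delUnl u v).adj u v

/-- Rule 3: `(u, v)` is an unlabeled edge such that (i) there is no other path from `u`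
to `v`; (ii) if `u` has an outgoing task then `v` has no incoming edge other than `(u,v)`;
(iii) if `v` has an incoming task then `u` has no outgoing edge other than `(u,v)`;
(iv) every incoming neighbor of `v` has a path to every outgoing neighbor of `u`. -/
def Rule3Cond {V T : Type} [DecidableEq V] (G : AOE V T) (u v : V) : Prop :=
  (u, v) ∈ G.unl ∧
  (¬ Relation.TransGen (G.delUnl u v).adj u v) ∧
  ((∃ t, G.St t = u) → (∀ t, G.En t ≠ v) ∧ ∀ w, (w, v) ∈ G.unl → w = u) ∧
  ((∃ t, G.En t = v) → (∀ t, G.St t ≠ u) ∧ ∀ w, (u, w) ∈ G.unl → w = v) ∧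
  ∀ w z, G.adj w v → G.adj u z → Relation.ReflTransGen G.adj w z

/-- One application of a simplification rule. -/
inductive Step {V T : Type} [DecidableEq V] : AOE V T → AOE V T → Prop
  | rule1out {G : AOE V T} (u v : V) : Rule1OutCond G u v → Step G (G.merge u v)
  | rule1in {G : AOE V T} (u v : V) : Rule1InCond G u v → Step G (G.merge u v)
  | rule2 {G : AOE V T} (u v : V) : Rule2Cond G u v → Step G (G.delUnl u v)
  | rule3 {G : AOE V T} (u v : V) : Rule3Cond G u v → Step G ((G.delUnl u v).merge u v)

/-- A canonical AOE: the naive expansion of an activity-on-node graph. Each task has its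
own pair of endpoint vertices, all pairwise distinct; there are a global start vertex `s`
and a global end vertex `e`; unlabeled edges other than those leaving `s` or entering `e`
go from end vertices of tasks to start vertices of tasks; `s` has unlabeled edges to
exactly the vertices whose only incoming edges come from `s`, and `e` has unlabeled edges
from exactly the vertices whose only outgoing edges go to `e`. -/
def Canonical {V T : Type} [DecidableEq V] [Fintype T] (G : AOE V T) : Prop :=
  G.Acyclic ∧ G.unl.Nodup ∧
  Function.Injective G.St ∧ Function.Injective G.En ∧
  (∀ t t' : T, G.St t ≠ G.En t') ∧
  ∃ s e : V, s ≠ e ∧ s ∈ G.verts ∧ e ∈ G.verts ∧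
    (∀ t, G.St t ≠ s ∧ G.St t ≠ e ∧ G.En t ≠ s ∧ G.En t ≠ e) ∧
    (G.verts =
      insert s (insert e (Finset.image G.St Finset.univ ∪ Finset.image G.En Finset.univ))) ∧
    (∀ a b : V, (a, b) ∈ G.unl → a ≠ s → b ≠ e → (∃ t, G.En t = a) ∧ ∃ t', G.St t' = b) ∧
    (∀ b : V, (s, b) ∈ G.unl ↔
      b ∈ G.verts ∧ b ≠ s ∧ (∀ t, G.En t ≠ b) ∧ ∀ a, (a, b) ∈ G.unl → a = s) ∧
    (∀ a : V, (a, e) ∈ G.unl ↔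
      a ∈ G.verts ∧ a ≠ e ∧ (∀ t, G.St t ≠ a) ∧ ∀ b, (a, b) ∈ G.unl → b = e)

/-- An output AOE: obtained from a canonical AOE by a finite sequence of rule
applications, such that no rule can still be applied. -/
def IsOutput {V T : Type} [DecidableEq V] [Fintype T] (G A : AOE V T) : Prop :=
  Canonical G ∧ Relation.ReflTransGen Step G A ∧ ∀ B : AOE V T, ¬ Step A B

theorem mergeSetV_mem {V : Type} [DecidableEq V] {S : Finset V} (C : Finset V) (c x : V)
    (hx : x ∈ S) : (if x ∈ C then c else x) ∈ insert c (S \ C) := by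
  split_ifs with h
  · exact Finset.mem_insert_self _ _
  · exact Finset.mem_insert_of_mem (Finset.mem_sdiff.mpr ⟨hx, h⟩)

/-- Merge all vertices of `C` into the single vertex `c`. -/
def AOE.mergeSet {V T : Type} [DecidableEq V] (G : AOE V T) (C : Finset V) (c : V) :
    AOE V T where
  verts := insert c (G.verts \ C)
  St t := if G.St t ∈ C then c else G.St t
  En t := if G.En t ∈ C then c else G.En t
  stMem t := mergeSetV_mem C c (G.St t) (G.stMem t)
  enMem t := mergeSetV_mem C c (G.En t) (G.enMem t)
  unl := G.unl.map fun e => (if e.1 ∈ C then c else e.1, if e.2 ∈ C then c else e.2)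
  unlMem := by
    intro e he
    rw [Multiset.mem_map] at he
    obtain ⟨a, ha, rfl⟩ := he
    obtain ⟨h1, h2⟩ := G.unlMem a ha
    exact ⟨mergeSetV_mem C c a.1 h1, mergeSetV_mem C c a.2 h2⟩

lemma adj_merge_of_adj {V T : Type} [DecidableEq V] (G : AOE V T) (u v a b : V)
    (h : G.adj a b) : (G.merge u v).adj (mergeV u v a) (mergeV u v b) := by
  rcases h with h | ⟨t, ht1, ht2⟩
  · left
    simp only [AOE.merge, Multiset.mem_map]
    exact ⟨(a, b), h, rfl⟩
  · right
    exact ⟨t, by simp [AOE.merge, ht1, ht2]⟩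

lemma adj_of_adj_merge {V T : Type} [DecidableEq V] {G : AOE V T} {u v a b : V}
    (h : (G.merge u v).adj a b) :
    ∃ a' b', mergeV u v a' = a ∧ mergeV u v b' = b ∧ G.adj a' b' := by
  rcases h with h | ⟨t, ht1, ht2⟩
  · simp only [AOE.merge, Multiset.mem_map] at h
    obtain ⟨⟨a', b'⟩, hm, he⟩ := h
    exact ⟨a', b', congrArg Prod.fst he, congrArg Prod.snd he, Or.inl hm⟩
  · exact ⟨G.St t, G.En t, ht1, ht2, Or.inr ⟨t, rfl, rfl⟩⟩

lemma mergeV_eq_cases {V : Type} [DecidableEq V] {u v x y : V}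
    (h : mergeV u v x = mergeV u v y) :
    x = y ∨ ((x = u ∨ x = v) ∧ (y = u ∨ y = v)) := by
  unfold mergeV at h
  split_ifs at h <;> tauto

/-- Rule 1 (merging two vertices with no outgoing task edges and the same
outgoing neighbors, or symmetrically for incoming) preserves the reachability relation
on tasks. -/
theorem stmt1 {V T : Type} [DecidableEq V] (G : AOE V T) (hG : G.Acyclic)
    (u v : V) (hu : u ∈ G.verts) (hv : v ∈ G.verts) (huv : u ≠ v)
    (hrule : ((∀ t, G.St t ≠ u) ∧ (∀ t, G.St t ≠ v) ∧ ∀ w, G.adj u w ↔ G.adj v w) ∨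
      ((∀ t, G.En t ≠ u) ∧ (∀ t, G.En t ≠ v) ∧ ∀ w, G.adj w u ↔ G.adj w v)) :
    ∀ t t' : T, t ≠ t' → (G.reach t t' ↔ (G.merge u v).reach t t') := by
  intro t t' htt
  constructor
  · intro h
    exact Relation.ReflTransGen.lift (mergeV u v)
      (fun a b hab => adj_merge_of_adj G u v a b hab) _ _ h
  · intro h
    rcases hrule with ⟨hSu, hSv, hadj⟩ | ⟨hEu, hEv, hadj⟩
    · -- outgoing case: head induction with invariant on the start vertex
      have key : ∀ a, Relation.ReflTransGen (G.merge u v).adj a ((G.merge u v).St t') →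
          ∀ x, mergeV u v x = a → Relation.ReflTransGen G.adj x (G.St t') := by
        intro a hpath
        induction hpath using Relation.ReflTransGen.head_induction_on with
        | refl =>
          intro x hx
          rcases mergeV_eq_cases (hx : mergeV u v x = mergeV u v (G.St t')) with rfl | ⟨_, h2⟩
          · exact Relation.ReflTransGen.refl
          · rcases h2 with h2 | h2
            · exact absurd h2 (hSu t')
            · exact absurd h2 (hSv t')
        | head hab _ ih =>
          intro x hx
          obtain ⟨a', b', ha', hb', hadj'⟩ := adj_of_adj_merge hab
          have hxb : G.adj x b' := by
            rcases mergeV_eq_cases (hx.trans ha'.symm) with rfl | ⟨hx1, hx2⟩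
            · exact hadj'
            · rcases hx1 with rfl | rfl <;> rcases hx2 with rfl | rfl
              · exact hadj'
              · exact (hadj b').mpr hadj'
              · exact (hadj b').mp hadj'
              · exact hadj'
          exact Relation.ReflTransGen.head hxb (ih b' hb')
      exact key _ h (G.En t) rfl
    · -- incoming case: tail induction with invariant on the end vertex
      have hstart : (G.merge u v).En t = G.En t := by
        show mergeV u v (G.En t) = G.En t
        unfold mergeV
        split_ifs with h1
        · exact absurd h1 (hEv t)
        · rfl
      unfold AOE.reach at h
      rw [hstart] at h
      have key : ∀ c, Relation.ReflTransGen (G.merge u v).adj (G.En t) c →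
          ∀ y, mergeV u v y = c → Relation.ReflTransGen G.adj (G.En t) y := by
        intro c hpath
        induction hpath with
        | refl =>
          intro y hy
          rcases mergeV_eq_cases (hy.trans hstart.symm : mergeV u v y = mergeV u v (G.En t)) with rfl | ⟨_, h2⟩
          · exact Relation.ReflTransGen.refl
          · rcases h2 with h2 | h2
            · exact absurd h2 (hEu t)
            · exact absurd h2 (hEv t)
        | tail _ hbc ih =>
          intro y hy
          obtain ⟨a', b', ha', hb', hadj'⟩ := adj_of_adj_merge hbc
          have hay : G.adj a' y := by
            rcases mergeV_eq_cases (hy.trans hb'.symm) with rfl | ⟨hy1, hy2⟩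
            · exact hadj'
            · rcases hy1 with rfl | rfl <;> rcases hy2 with rfl | rfl
              · exact hadj'
              · exact (hadj a').mpr hadj'
              · exact (hadj a').mp hadj'
              · exact hadj'
          exact Relation.ReflTransGen.tail (ih a' ha') hay
      exact key _ h (G.St t') rfl

end AOEPaper
end

section
/- Let G be an activity-on-edge graph containing an unlabeled edge (u, v) such that there is another directed path from u to v in G not using this edge, and let G' be the graph obtained from G by deleting the edge (u, v). Then for all tasks T ≠ T', T reaches T' in G if and only if T reaches T' in G'. -/
namespace AOEPaper

/-- Rule 2 (deleting an unlabeled edge `(u, v)` when another directed path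
from `u` to `v` exists) preserves the reachability relation on tasks. -/
theorem stmt2 {V T : Type} [DecidableEq V] (G : AOE V T) (hG : G.Acyclic)
    (u v : V) (he : (u, v) ∈ G.unl)
    (hpath : Relation.TransGen (G.delUnl u v).adj u v) :
    ∀ t t' : T, t ≠ t' → (G.reach t t' ↔ (G.delUnl u v).reach t t') := by
  have hstep : ∀ a b : V, G.adj a b → Relation.ReflTransGen (G.delUnl u v).adj a b := by
    intro a b hab
    rcases hab with h | h
    · by_cases h' : (a, b) ∈ (G.delUnl u v).unl
      · exact Relation.ReflTransGen.single (Or.inl h')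
      · have : (a, b) = (u, v) := by
          by_contra hne
          exact h' (Multiset.mem_erase_of_ne hne |>.mpr h)
        obtain ⟨rfl, rfl⟩ := Prod.mk.injEq .. ▸ this
        exact hpath.to_reflTransGen
    · exact Relation.ReflTransGen.single (Or.inr h)
  have hfwd : ∀ a b : V, Relation.ReflTransGen G.adj a b →
      Relation.ReflTransGen (G.delUnl u v).adj a b := by
    intro a b hab
    induction hab with
    | refl => exact Relation.ReflTransGen.refl
    | tail _ h ih => exact ih.trans (hstep _ _ h)
  have hbwd : ∀ a b : V, Relation.ReflTransGen (G.delUnl u v).adj a b →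
      Relation.ReflTransGen G.adj a b := by
    intro a b hab
    refine Relation.ReflTransGen.mono ?_ a b hab
    rintro x y (h | h)
    · exact Or.inl (Multiset.mem_of_mem_erase h)
    · exact Or.inr h
  intro t t' _
  exact ⟨hfwd _ _, hbwd _ _⟩

end AOEPaper
end

section
/- Let G be an activity-on-edge graph with an unlabeled edge (u, v) satisfying all of: (i) there is no directed path from u to v in G other than the edge (u, v) itself; (ii) if u has an outgoing task edge then v has no incoming edge other than (u, v); (iii) if v has an incoming task edge then u has no outgoing edge other than (u, v); (iv) every incoming neighbor of v has a directed path in G to every outgoing neighbor of u. Let G' be the graph obtained from G by merging u and v into a single vertex. Then for all tasks T ≠ T', T reaches T' in G if and only if T reaches T' in G'. -/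
namespace AOEPaper

lemma mergeV_eq_mergeV {V : Type} [DecidableEq V] {u v a b : V}
    (h : mergeV u v a = mergeV u v b) : a = b ∨ (a = u ∧ b = v) ∨ (a = v ∧ b = u) := by
  unfold mergeV at h
  split_ifs at h with h1 h2 h2 <;> subst_vars <;> simp_all

lemma mergeV_self {V : Type} [DecidableEq V] (u v : V) : mergeV u v u = u := by
  unfold mergeV; split_ifs <;> simp_all

lemma mergeV_v {V : Type} [DecidableEq V] (u v : V) : mergeV u v v = u := by
  simp [mergeV]

lemma merge_adj_iff {V T : Type} [DecidableEq V] (G : AOE V T) (u v a b : V) :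
    ((G.delUnl u v).merge u v).adj a b ↔
      ∃ p q, mergeV u v p = a ∧ mergeV u v q = b ∧
        ((p, q) ∈ G.unl.erase (u, v) ∨ ∃ t, G.St t = p ∧ G.En t = q) := by
  show ((a, b) ∈ Multiset.map _ _ ∨ _) ↔ _
  constructor
  · rintro (h | ⟨t, ht1, ht2⟩)
    · rw [Multiset.mem_map] at h
      obtain ⟨⟨p, q⟩, hpq, he⟩ := h
      exact ⟨p, q, congrArg Prod.fst he, congrArg Prod.snd he, Or.inl hpq⟩
    · exact ⟨G.St t, G.En t, ht1, ht2, Or.inr ⟨t, rfl, rfl⟩⟩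
  · rintro ⟨p, q, hp, hq, (h | ⟨t, ht1, ht2⟩)⟩
    · exact Or.inl (Multiset.mem_map.mpr ⟨(p, q), h, by simp [hp, hq]⟩)
    · exact Or.inr ⟨t, by simp [AOE.merge, AOE.delUnl, ht1, ht2, hp, hq]⟩

lemma forward_step {V T : Type} [DecidableEq V] (G : AOE V T) (u v a b : V)
    (h : G.adj a b) :
    Relation.ReflTransGen ((G.delUnl u v).merge u v).adj (mergeV u v a) (mergeV u v b) := by
  rcases h with h | ⟨t, ht1, ht2⟩
  · by_cases hab : (a, b) = (u, v)
    · obtain ⟨rfl, rfl⟩ := Prod.mk.injEq a b u v ▸ hab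
      rw [mergeV_self, mergeV_v]
    · exact Relation.ReflTransGen.single <| (merge_adj_iff G u v _ _).mpr
        ⟨a, b, rfl, rfl, Or.inl ((Multiset.mem_erase_of_ne hab).mpr h)⟩
  · exact Relation.ReflTransGen.single <| (merge_adj_iff G u v _ _).mpr
      ⟨a, b, rfl, rfl, Or.inr ⟨t, ht1, ht2⟩⟩

lemma forward_path {V T : Type} [DecidableEq V] (G : AOE V T) (u v a b : V)
    (h : Relation.ReflTransGen G.adj a b) :
    Relation.ReflTransGen ((G.delUnl u v).merge u v).adj (mergeV u v a) (mergeV u v b) := by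
  induction h with
  | refl => exact Relation.ReflTransGen.refl
  | tail _ hstep ih => exact ih.trans (forward_step G u v _ _ hstep)

lemma backward_aux {V T : Type} [DecidableEq V] (G : AOE V T) (u v : V)
    (hrule : Rule3Cond G u v) (a b : V)
    (h : Relation.ReflTransGen ((G.delUnl u v).merge u v).adj a b) :
    ∀ x, mergeV u v x = a → (x = v → ∃ s, G.En s = v) →
      ∃ y, mergeV u v y = b ∧ Relation.ReflTransGen G.adj x y := by
  induction h with
  | refl => exact fun x hx _ => ⟨x, hx, Relation.ReflTransGen.refl⟩
  | tail _ hstep ih =>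
    intro x hx hxv
    obtain ⟨y0, hy0, hpath⟩ := ih x hx hxv
    obtain ⟨p, q, hp, hq, hedge⟩ := (merge_adj_iff G u v _ _).mp hstep
    have hadjpq : G.adj p q := by
      rcases hedge with h | h
      · exact Or.inl (Multiset.mem_of_mem_erase h)
      · exact Or.inr h
    rcases mergeV_eq_mergeV (hy0.trans hp.symm) with rfl | ⟨h1, h2⟩ | ⟨h1, h2⟩
    · exact ⟨q, hq, hpath.tail hadjpq⟩
    · -- y0 = u, p = v : insert the edge (u,v)
      rw [h1] at hpath
      rw [h2] at hadjpq
      exact ⟨q, hq, (hpath.tail (Or.inl hrule.1)).tail hadjpq⟩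
    · -- y0 = v, p = u
      rw [h1] at hpath
      rw [h2] at hadjpq hedge
      by_cases htask : ∃ s, G.En s = v
      · obtain ⟨hSt, hUnl⟩ := hrule.2.2.2.1 htask
        rcases hedge with h | ⟨s, hs1, hs2⟩
        · have hq' : q = v := hUnl q (Multiset.mem_of_mem_erase h)
          rw [hq'] at hq
          exact ⟨v, hq, hpath⟩
        · exact absurd hs1 (hSt s)
      · rcases hpath.cases_tail with heq | ⟨w, pw, hwv⟩
        · exact absurd (hxv heq.symm) htask
        · exact ⟨q, hq, pw.trans (hrule.2.2.2.2 w q hwv hadjpq)⟩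

/-- Rule 3 (merging the endpoints of an unlabeled edge `(u, v)` satisfying
the four conditions, the edge `(u, v)` disappearing) preserves the reachability relation
on tasks. -/
theorem stmt3 {V T : Type} [DecidableEq V] (G : AOE V T) (hG : G.Acyclic)
    (u v : V) (hrule : Rule3Cond G u v) :
    ∀ t t' : T, t ≠ t' → (G.reach t t' ↔ ((G.delUnl u v).merge u v).reach t t') := by
  intro t t' _
  constructor
  · intro h
    exact forward_path G u v _ _ h
  · intro h
    have h' : Relation.ReflTransGen ((G.delUnl u v).merge u v).adj
        (mergeV u v (G.En t)) (mergeV u v (G.St t')) := h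
    obtain ⟨y, hy, hpath⟩ := backward_aux G u v hrule _ _ h' (G.En t) rfl (fun hv => ⟨t, hv⟩)
    show Relation.ReflTransGen G.adj (G.En t) (G.St t')
    rcases mergeV_eq_mergeV hy with heq | ⟨h1, hst⟩ | ⟨h1, hst⟩
    · exact heq ▸ hpath
    · rw [h1] at hpath
      rw [hst]
      exact hpath.tail (Or.inl hrule.1)
    · rw [h1] at hpath
      obtain ⟨hEn, hUnl⟩ := hrule.2.2.1 ⟨t', hst⟩
      rcases hpath.cases_tail with heq | ⟨w, pw, hwv⟩
      · exact absurd heq.symm (hEn t)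
      · rcases hwv with h | ⟨s, _, hs2⟩
        · have hw : w = u := hUnl w h
          rw [hst, ← hw]
          exact pw
        · exact absurd hs2 (hEn s)

end AOEPaper
end

section
/- Let 𝒜 be any output AOE of the simplification algorithm (a graph obtained from a canonical AOE by applying Rules 1, 2, 3 until none applies). Then for every unlabeled edge (u, v) of 𝒜 there exist tasks T and T' such that u = End_𝒜(T) and v = St_𝒜(T'). -/
namespace AOEPaper

/-! ### Auxiliary development for Statement 7 -/

section Stmt7Aux

set_option linter.unusedSectionVars false

variable {V T : Type} [DecidableEq V]

lemma mergeV_fst (x y : V) : mergeV x y x = x := by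
  unfold mergeV; split_ifs <;> rfl

lemma mergeV_snd (x y : V) : mergeV x y y = x := by
  simp [mergeV]

lemma mergeV_of_ne {a y : V} (x : V) (h : a ≠ y) : mergeV x y a = a := by
  simp [mergeV, h]

lemma mergeV_eq_x_iff {x y a : V} : mergeV x y a = x ↔ a = x ∨ a = y := by
  unfold mergeV
  split_ifs with h
  · simp [h]
  · constructor
    · intro h'; exact Or.inl h'
    · rintro (h' | h')
      · exact h'
      · exact absurd h' h

lemma mergeV_eq_of_ne_x {x y a c : V} (hc : c ≠ x) : mergeV x y a = c ↔ a = c ∧ a ≠ y := by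
  unfold mergeV
  split_ifs with h
  · constructor
    · intro h'; exact absurd h'.symm hc
    · rintro ⟨rfl, h2⟩; exact absurd h h2
  · constructor
    · intro h'; exact ⟨h', h' ▸ h⟩
    · exact fun h' => h'.1

lemma mergeV_fiber {x y a b : V} (h : mergeV x y a = mergeV x y b) :
    a = b ∨ (a = x ∧ b = y) ∨ (a = y ∧ b = x) := by
  unfold mergeV at h
  split_ifs at h with h1 h2 h2
  · exact Or.inl (h1.trans h2.symm)
  · exact Or.inr (Or.inr ⟨h1, h.symm⟩)
  · exact Or.inr (Or.inl ⟨h, h2⟩)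
  · exact Or.inl h

namespace AOE

lemma adj_mem_left {G : AOE V T} {a b : V} (h : G.adj a b) : a ∈ G.verts := by
  rcases h with h | ⟨t, h1, _⟩
  · exact (G.unlMem _ h).1
  · exact h1 ▸ G.stMem t

lemma adj_mem_right {G : AOE V T} {a b : V} (h : G.adj a b) : b ∈ G.verts := by
  rcases h with h | ⟨t, _, h2⟩
  · exact (G.unlMem _ h).2
  · exact h2 ▸ G.enMem t

lemma delUnl_adj_sub {G : AOE V T} {x y a b : V} (h : (G.delUnl x y).adj a b) : G.adj a b := by
  rcases h with h | h
  · exact Or.inl (Multiset.mem_of_mem_erase h)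
  · exact Or.inr h

lemma merge_unl_mem {G : AOE V T} {x y : V} {p q : V} :
    (p, q) ∈ (G.merge x y).unl ↔ ∃ a b, (a, b) ∈ G.unl ∧ mergeV x y a = p ∧ mergeV x y b = q := by
  constructor
  · intro h
    rw [AOE.merge, Multiset.mem_map] at h
    obtain ⟨⟨a, b⟩, hab, heq⟩ := h
    exact ⟨a, b, hab, congrArg Prod.fst heq, congrArg Prod.snd heq⟩
  · rintro ⟨a, b, hab, h1, h2⟩
    rw [AOE.merge, Multiset.mem_map]
    exact ⟨(a, b), hab, by rw [← h1, ← h2]⟩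

lemma merge_adj_iff {G : AOE V T} {x y : V} {p q : V} :
    (G.merge x y).adj p q ↔ ∃ a b, G.adj a b ∧ mergeV x y a = p ∧ mergeV x y b = q := by
  constructor
  · intro h
    rcases h with h | ⟨t, h1, h2⟩
    · obtain ⟨a, b, hab, h1, h2⟩ := merge_unl_mem.mp h
      exact ⟨a, b, Or.inl hab, h1, h2⟩
    · exact ⟨G.St t, G.En t, Or.inr ⟨t, rfl, rfl⟩, h1, h2⟩
  · rintro ⟨a, b, hab, h1, h2⟩
    rcases hab with hab | ⟨t, ht1, ht2⟩
    · exact Or.inl (merge_unl_mem.mpr ⟨a, b, hab, h1, h2⟩)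
    · exact Or.inr ⟨t, by rw [AOE.merge]; dsimp; rw [ht1, h1], by rw [AOE.merge]; dsimp; rw [ht2, h2]⟩

end AOE

/-- No incoming edge at all. -/
def NoIn (G : AOE V T) (a : V) : Prop := ∀ w, ¬ G.adj w a

/-- No outgoing edge at all. -/
def NoOut (G : AOE V T) (a : V) : Prop := ∀ w, ¬ G.adj a w

/-- Invariant property of the tail of an unlabeled edge. -/
def TailP (G : AOE V T) (a : V) : Prop :=
  (∃ t, G.En t = a) ∨
    (NoIn G a ∧ ∀ b, (a, b) ∈ G.unl → ∀ w, (w, b) ∈ G.unl → w = a)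

/-- Invariant property of the head of an unlabeled edge. -/
def HeadP (G : AOE V T) (b : V) : Prop :=
  (∃ t, G.St t = b) ∨
    (NoOut G b ∧ ∀ a, (a, b) ∈ G.unl → ∀ w, (a, w) ∈ G.unl → w = b)

def UniqSrc (G : AOE V T) : Prop :=
  ∀ p ∈ G.verts, ∀ q ∈ G.verts, NoIn G p → NoIn G q → p = q

def UniqSink (G : AOE V T) : Prop :=
  ∀ p ∈ G.verts, ∀ q ∈ G.verts, NoOut G p → NoOut G q → p = q

/-- The master invariant preserved by all simplification rules. -/
def Inv (G : AOE V T) : Prop :=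
  G.Acyclic ∧ UniqSrc G ∧ UniqSink G ∧
    ∀ a b, (a, b) ∈ G.unl → TailP G a ∧ HeadP G b

/-- The opposite (edge-reversed) AOE. -/
def AOE.op (G : AOE V T) : AOE V T where
  verts := G.verts
  St := G.En
  En := G.St
  stMem := G.enMem
  enMem := G.stMem
  unl := G.unl.map Prod.swap
  unlMem := by
    intro e he
    rw [Multiset.mem_map] at he
    obtain ⟨a, ha, rfl⟩ := he
    exact ⟨(G.unlMem a ha).2, (G.unlMem a ha).1⟩

lemma op_unl_mem {G : AOE V T} {a b : V} : (a, b) ∈ G.op.unl ↔ (b, a) ∈ G.unl := by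
  rw [AOE.op, Multiset.mem_map]
  constructor
  · rintro ⟨⟨c, d⟩, h, heq⟩
    simp only [Prod.swap_prod_mk, Prod.mk.injEq] at heq
    obtain ⟨rfl, rfl⟩ := heq
    exact h
  · intro h
    exact ⟨(b, a), h, rfl⟩

lemma op_adj {G : AOE V T} {a b : V} : G.op.adj a b ↔ G.adj b a := by
  unfold AOE.adj
  rw [op_unl_mem]
  constructor
  · rintro (h | ⟨t, h1, h2⟩)
    · exact Or.inl h
    · exact Or.inr ⟨t, h2, h1⟩
  · rintro (h | ⟨t, h1, h2⟩)
    · exact Or.inl h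
    · exact Or.inr ⟨t, h2, h1⟩

lemma op_op (G : AOE V T) : G.op.op = G := by
  cases G
  simp only [AOE.op, Multiset.map_map]
  congr 1
  simp [Function.comp]

lemma op_acyclic {G : AOE V T} (h : G.Acyclic) : G.op.Acyclic := by
  intro v hv
  refine h v ?_
  have : ∀ a b, Relation.TransGen G.op.adj a b → Relation.TransGen G.adj b a := by
    intro a b hab
    induction hab with
    | single h1 => exact Relation.TransGen.single (op_adj.mp h1)
    | tail _ h2 ih => exact Relation.TransGen.head (op_adj.mp h2) ih
  exact this v v hv

lemma op_merge (G : AOE V T) (x y : V) : (G.merge x y).op = G.op.merge x y := by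
  simp only [AOE.merge, AOE.op, Multiset.map_map]
  congr 1

lemma op_delUnl (G : AOE V T) (x y : V) : (G.delUnl x y).op = G.op.delUnl y x := by
  simp only [AOE.delUnl, AOE.op]
  congr 1
  rw [Multiset.map_erase _ (Prod.swap_injective) (x, y) G.unl]
  rfl

lemma noIn_op {G : AOE V T} {a : V} : NoIn G.op a ↔ NoOut G a := by
  constructor
  · intro h w hw; exact h w (op_adj.mpr hw)
  · intro h w hw; exact h w (op_adj.mp hw)

lemma noOut_op {G : AOE V T} {a : V} : NoOut G.op a ↔ NoIn G a := by
  constructor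
  · intro h w hw; exact h w (op_adj.mpr hw)
  · intro h w hw; exact h w (op_adj.mp hw)

lemma tailP_op {G : AOE V T} {a : V} : TailP G.op a ↔ HeadP G a := by
  unfold TailP HeadP
  rw [noIn_op]
  constructor
  · rintro (h | ⟨h1, h2⟩)
    · exact Or.inl h
    · refine Or.inr ⟨h1, fun b hb w hw => ?_⟩
      exact h2 b (op_unl_mem.mpr hb) w (op_unl_mem.mpr hw)
  · rintro (h | ⟨h1, h2⟩)
    · exact Or.inl h
    · refine Or.inr ⟨h1, fun b hb w hw => ?_⟩
      exact h2 b (op_unl_mem.mp hb) w (op_unl_mem.mp hw)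

lemma headP_op {G : AOE V T} {a : V} : HeadP G.op a ↔ TailP G a := by
  conv_rhs => rw [← op_op G]
  rw [tailP_op]

lemma inv_op {G : AOE V T} (h : Inv G) : Inv G.op := by
  obtain ⟨hac, hsrc, hsink, hedge⟩ := h
  refine ⟨op_acyclic hac, ?_, ?_, ?_⟩
  · intro p hp q hq h1 h2
    exact hsink p hp q hq (noIn_op.mp h1) (noIn_op.mp h2)
  · intro p hp q hq h1 h2
    exact hsrc p hp q hq (noOut_op.mp h1) (noOut_op.mp h2)
  · intro a b hab
    have := hedge b a (op_unl_mem.mp hab)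
    exact ⟨tailP_op.mpr this.2, headP_op.mpr this.1⟩


lemma tg_op {G : AOE V T} {a b : V} (h : Relation.TransGen G.adj a b) :
    Relation.TransGen G.op.adj b a := by
  induction h with
  | single h1 => exact Relation.TransGen.single (op_adj.mpr h1)
  | tail _ h2 ih => exact Relation.TransGen.head (op_adj.mpr h2) ih

lemma rtg_op {G : AOE V T} {a b : V} (h : Relation.ReflTransGen G.adj a b) :
    Relation.ReflTransGen G.op.adj b a := by
  induction h with
  | refl => exact Relation.ReflTransGen.refl
  | tail _ h2 ih => exact Relation.ReflTransGen.head (op_adj.mpr h2) ih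

lemma r1out_to_op {G : AOE V T} {u v : V} (h : Rule1OutCond G u v) :
    Rule1InCond G.op u v := by
  obtain ⟨h1, h2, h3, h4, h5, h6⟩ := h
  exact ⟨h1, h2, h3, h4, h5, fun w => by rw [op_adj, op_adj]; exact h6 w⟩

lemma r1in_to_op {G : AOE V T} {u v : V} (h : Rule1InCond G u v) :
    Rule1OutCond G.op u v := by
  obtain ⟨h1, h2, h3, h4, h5, h6⟩ := h
  exact ⟨h1, h2, h3, h4, h5, fun w => by rw [op_adj, op_adj]; exact h6 w⟩

lemma r2_to_op {G : AOE V T} {u v : V} (h : Rule2Cond G u v) :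
    Rule2Cond G.op v u := by
  obtain ⟨h1, h2⟩ := h
  refine ⟨op_unl_mem.mpr h1, ?_⟩
  rw [← op_delUnl]
  exact tg_op h2

lemma r3_to_op {G : AOE V T} {u v : V} (h : Rule3Cond G u v) :
    Rule3Cond G.op v u := by
  obtain ⟨h1, h2, h3, h4, h5⟩ := h
  refine ⟨op_unl_mem.mpr h1, ?_, ?_, ?_, ?_⟩
  · rw [← op_delUnl]
    intro hvu
    have := tg_op hvu
    rw [op_op] at this
    exact h2 this
  · intro hst
    obtain ⟨hA, hB⟩ := h4 hst
    exact ⟨hA, fun w hw => hB w (op_unl_mem.mp hw)⟩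
  · intro hen
    obtain ⟨hA, hB⟩ := h3 hen
    exact ⟨hA, fun w hw => hB w (op_unl_mem.mp hw)⟩
  · intro w z hw hz
    exact rtg_op (h5 z w (op_adj.mp hz) (op_adj.mp hw))

lemma noStep_op [Fintype T] {G : AOE V T} (h : ∀ B, ¬ Step G B) :
    ∀ B : AOE V T, ¬ Step G.op B := by
  intro B hB
  cases hB with
  | rule1out u v hc =>
      have := r1out_to_op hc
      rw [op_op] at this
      exact h _ (Step.rule1in u v this)
  | rule1in u v hc =>
      have := r1in_to_op hc
      rw [op_op] at this
      exact h _ (Step.rule1out u v this)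
  | rule2 u v hc =>
      have := r2_to_op hc
      rw [op_op] at this
      exact h _ (Step.rule2 v u this)
  | rule3 u v hc =>
      have := r3_to_op hc
      rw [op_op] at this
      exact h _ (Step.rule3 v u this)

lemma acyclic_delUnl {G : AOE V T} {x y : V} (h : G.Acyclic) : (G.delUnl x y).Acyclic := by
  intro v hv
  exact h v (Relation.TransGen.mono (fun _ _ => AOE.delUnl_adj_sub) _ _ hv)

lemma merge_tg_lift_out {G : AOE V T} {x y : V}
    (hiff : ∀ w, G.adj x w ↔ G.adj y w) {p q : V}
    (h : Relation.TransGen (G.merge x y).adj p q) :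
    ∃ a b, mergeV x y a = p ∧ mergeV x y b = q ∧ Relation.TransGen G.adj a b := by
  induction h with
  | single h1 =>
      obtain ⟨a, b, hab, h1, h2⟩ := AOE.merge_adj_iff.mp h1
      exact ⟨a, b, h1, h2, Relation.TransGen.single hab⟩
  | @tail q r _ hqr ih =>
      obtain ⟨a, b₁, hfa, hfb₁, htg⟩ := ih
      obtain ⟨b₂, c, hadj, hfb₂, hfc⟩ := AOE.merge_adj_iff.mp hqr
      rcases mergeV_fiber (hfb₁.trans hfb₂.symm) with h | ⟨h1, h2⟩ | ⟨h1, h2⟩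
      · exact ⟨a, c, hfa, hfc, htg.tail (h ▸ hadj)⟩
      · subst h1; subst h2
        exact ⟨a, c, hfa, hfc, htg.tail ((hiff c).mpr hadj)⟩
      · subst h1; subst h2
        exact ⟨a, c, hfa, hfc, htg.tail ((hiff c).mp hadj)⟩

lemma acyclic_merge_out {G : AOE V T} {x y : V} (h : G.Acyclic)
    (hiff : ∀ w, G.adj x w ↔ G.adj y w) : (G.merge x y).Acyclic := by
  intro v hv
  obtain ⟨a, b, hfa, hfb, htg⟩ := merge_tg_lift_out hiff hv
  rcases mergeV_fiber (hfa.trans hfb.symm) with heq | ⟨h1, h2⟩ | ⟨h1, h2⟩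
  · exact h a (heq ▸ htg)
  all_goals {
    subst h1; subst h2
    obtain ⟨c, hac, hcb⟩ := Relation.TransGen.head'_iff.mp htg
    first
      | exact h _ (Relation.TransGen.head' ((hiff c).mp hac) hcb)
      | exact h _ (Relation.TransGen.head' ((hiff c).mpr hac) hcb) }

lemma acyclic_merge_in {G : AOE V T} {x y : V} (h : G.Acyclic)
    (hiff : ∀ w, G.adj w x ↔ G.adj w y) : (G.merge x y).Acyclic := by
  have hop : (G.op.merge x y).Acyclic := by
    refine acyclic_merge_out (op_acyclic h) ?_
    intro w; rw [op_adj, op_adj]; exact hiff w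
  rw [← op_merge] at hop
  have := op_acyclic hop
  rw [op_op] at this
  exact this

section Rule3Acyclic

variable {G : AOE V T} {x y : V}

lemma rule3_no_seg (hG : G.Acyclic) (hmem : (x, y) ∈ G.unl)
    (hi : ¬ Relation.TransGen (G.delUnl x y).adj x y) {c d : V}
    (hc : c = x ∨ c = y) (hd : d = x ∨ d = y)
    (h : Relation.TransGen (G.delUnl x y).adj c d) : False := by
  have hG' : Relation.TransGen G.adj c d := Relation.TransGen.mono (fun _ _ => AOE.delUnl_adj_sub) _ _ h
  rcases hc with rfl | rfl <;> rcases hd with rfl | rfl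
  · exact hG _ hG'
  · exact hi h
  · exact hG _ (hG'.tail (Or.inl hmem))
  · exact hG _ hG'

lemma rule3_d_to_merged {a b : V} (h : (G.delUnl x y).adj a b) :
    ((G.delUnl x y).merge x y).adj (mergeV x y a) (mergeV x y b) :=
  AOE.merge_adj_iff.mpr ⟨a, b, h, rfl, rfl⟩

lemma rule3_lift (hG : G.Acyclic) (hmem : (x, y) ∈ G.unl)
    (hi : ¬ Relation.TransGen (G.delUnl x y).adj x y) {p q : V}
    (h : Relation.TransGen ((G.delUnl x y).merge x y).adj p q) :
    (∃ a b, mergeV x y a = p ∧ mergeV x y b = q ∧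
      Relation.TransGen (G.delUnl x y).adj a b) ∨
    (Relation.ReflTransGen ((G.delUnl x y).merge x y).adj p x ∧
      ∃ c b, (c = x ∨ c = y) ∧ mergeV x y b = q ∧
        Relation.TransGen (G.delUnl x y).adj c b) := by
  induction h with
  | single h1 =>
      obtain ⟨a, b, hab, hfa, hfb⟩ := AOE.merge_adj_iff.mp h1
      exact Or.inl ⟨a, b, hfa, hfb, Relation.TransGen.single hab⟩
  | @tail q r hpq hqr ih =>
      obtain ⟨b₂, c₀, hD2, hfb₂, hfc₀⟩ := AOE.merge_adj_iff.mp hqr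
      rcases ih with ⟨a, b₁, hfa, hfb₁, htg⟩ | ⟨hrtg, c, b₁, hcxy, hfb₁, htg⟩
      · rcases mergeV_fiber (hfb₁.trans hfb₂.symm) with heq | ⟨h1, h2⟩ | ⟨h1, h2⟩
        · exact Or.inl ⟨a, c₀, hfa, hfc₀, htg.tail (heq ▸ hD2)⟩
        · refine Or.inr ⟨?_, b₂, c₀, Or.inr h2, hfc₀, Relation.TransGen.single hD2⟩
          have : q = x := by rw [← hfb₁, h1, mergeV_fst]
          exact this ▸ hpq.to_reflTransGen
        · refine Or.inr ⟨?_, b₂, c₀, Or.inl h2, hfc₀, Relation.TransGen.single hD2⟩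
          have : q = x := by rw [← hfb₁, h1, mergeV_snd]
          exact this ▸ hpq.to_reflTransGen
      · rcases mergeV_fiber (hfb₁.trans hfb₂.symm) with heq | ⟨h1, h2⟩ | ⟨h1, h2⟩
        · exact Or.inr ⟨hrtg, c, c₀, hcxy, hfc₀, htg.tail (heq ▸ hD2)⟩
        · exact absurd htg (fun ht => rule3_no_seg hG hmem hi hcxy (Or.inl h1) ht)
        · exact absurd htg (fun ht => rule3_no_seg hG hmem hi hcxy (Or.inr h1) ht)

lemma acyclic_rule3 (hG : G.Acyclic) (hc : Rule3Cond G x y) :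
    ((G.delUnl x y).merge x y).Acyclic := by
  obtain ⟨hmem, hi, _, _, _⟩ := hc
  intro v hv
  have kill : ∀ a b : V, (a = x ∨ a = y) → (b = x ∨ b = y) →
      ¬ Relation.TransGen (G.delUnl x y).adj a b := by
    intro a b ha hb ht
    rcases ha with rfl | rfl <;> rcases hb with rfl | rfl
    · exact hG _ (Relation.TransGen.mono (fun _ _ => AOE.delUnl_adj_sub) _ _ ht)
    · exact hi ht
    · exact hG _ ((Relation.TransGen.mono (fun _ _ => AOE.delUnl_adj_sub) _ _ ht).tail (Or.inl hmem))
    · exact hG _ (Relation.TransGen.mono (fun _ _ => AOE.delUnl_adj_sub) _ _ ht)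
  rcases rule3_lift hG hmem hi hv with ⟨a, b, hfa, hfb, htg⟩ | ⟨hrtg, c, b, hcxy, hfb, htg⟩
  · rcases mergeV_fiber (hfa.trans hfb.symm) with heq | ⟨h1, h2⟩ | ⟨h1, h2⟩
    · subst heq; exact acyclic_delUnl hG a htg
    · exact kill a b (Or.inl h1) (Or.inr h2) htg
    · exact kill a b (Or.inr h1) (Or.inl h2) htg
  · have hMxv : Relation.TransGen ((G.delUnl x y).merge x y).adj x v := by
      have h1 : Relation.TransGen ((G.delUnl x y).merge x y).adj (mergeV x y c) (mergeV x y b) := Relation.TransGen.lift (mergeV x y) (fun _ _ h => rule3_d_to_merged h) _ _ htg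
      have hfcx : mergeV x y c = x := mergeV_eq_x_iff.mpr hcxy
      rw [hfcx, hfb] at h1
      exact h1
    have hxx : Relation.TransGen ((G.delUnl x y).merge x y).adj x x :=
      hMxv.trans_left hrtg
    rcases rule3_lift hG hmem hi hxx with ⟨a, b, hfa, hfb2, htg2⟩ | ⟨_, c2, b2, hc2, hfb2, htg2⟩
    · exact kill a b (mergeV_eq_x_iff.mp hfa) (mergeV_eq_x_iff.mp hfb2) htg2
    · exact kill c2 b2 hc2 (mergeV_eq_x_iff.mp hfb2) htg2

end Rule3Acyclic


lemma preserve_rule2 {G : AOE V T} {x y : V} (hInv : Inv G) (hc : Rule2Cond G x y) :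
    Inv (G.delUnl x y) := by
  obtain ⟨hac, hsrc, hsink, hedge⟩ := hInv
  obtain ⟨hmem, htg⟩ := hc
  have keyIn : ∀ r, NoIn (G.delUnl x y) r → NoIn G r := by
    intro r hr
    by_cases hry : r = y
    · subst hry
      obtain ⟨m, _, hmy⟩ := Relation.TransGen.tail'_iff.mp htg
      exact absurd hmy (hr m)
    · intro w hw
      refine hr w ?_
      rcases hw with hw | hw
      · exact Or.inl ((Multiset.mem_erase_of_ne fun hh => hry (congrArg Prod.snd hh)).mpr hw)
      · exact Or.inr hw
  have keyOut : ∀ r, NoOut (G.delUnl x y) r → NoOut G r := by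
    intro r hr
    by_cases hrx : r = x
    · subst hrx
      obtain ⟨m, hxm, _⟩ := Relation.TransGen.head'_iff.mp htg
      exact absurd hxm (hr m)
    · intro w hw
      refine hr w ?_
      rcases hw with hw | hw
      · exact Or.inl ((Multiset.mem_erase_of_ne fun hh => hrx (congrArg Prod.fst hh)).mpr hw)
      · exact Or.inr hw
  refine ⟨acyclic_delUnl hac, ?_, ?_, ?_⟩
  · intro p hp q hq h1 h2
    exact hsrc p hp q hq (keyIn p h1) (keyIn q h2)
  · intro p hp q hq h1 h2
    exact hsink p hp q hq (keyOut p h1) (keyOut q h2)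
  · intro a b hab
    obtain ⟨hTa, hHb⟩ := hedge a b (Multiset.mem_of_mem_erase hab)
    constructor
    · rcases hTa with h | ⟨hN, hU⟩
      · exact Or.inl h
      · exact Or.inr ⟨fun w hw => hN w (AOE.delUnl_adj_sub hw),
          fun b' hb' w hw => hU b' (Multiset.mem_of_mem_erase hb') w
            (Multiset.mem_of_mem_erase hw)⟩
    · rcases hHb with h | ⟨hN, hV⟩
      · exact Or.inl h
      · exact Or.inr ⟨fun w hw => hN w (AOE.delUnl_adj_sub hw),
          fun a' ha' w hw => hV a' (Multiset.mem_of_mem_erase ha') w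
            (Multiset.mem_of_mem_erase hw)⟩

section Rule1Out

variable {G : AOE V T} {x y : V}

lemma preserve_rule1out (hInv : Inv G) (hc : Rule1OutCond G x y) :
    Inv (G.merge x y) := by
  obtain ⟨hac, hsrc, hsink, hedge⟩ := hInv
  obtain ⟨hxv, hyv, hxy, hSx, hSy, hiff⟩ := hc
  set H := G.merge x y with hH
  -- sinks of H that are not x are G-sinks; x is never an H-sink unless x=y
  have hvertsH : ∀ p, p ∈ H.verts → p = x ∨ (p ∈ G.verts ∧ p ≠ y) := by
    intro p hp
    rcases Finset.mem_insert.mp hp with h | h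
    · exact Or.inl h
    · exact Or.inr ⟨Finset.mem_of_mem_erase h, (Finset.mem_erase.mp h).1⟩
  have hsinkX : ¬ NoOut H x := by
    intro hs
    refine hxy (hsink x hxv y hyv ?_ ?_)
    · intro w hw
      exact hs (mergeV x y w) (AOE.merge_adj_iff.mpr ⟨x, w, hw, mergeV_fst x y, rfl⟩)
    · intro w hw
      exact hs (mergeV x y w) (AOE.merge_adj_iff.mpr ⟨y, w, hw, mergeV_snd x y, rfl⟩)
  have hsrcX : ¬ NoIn H x := by
    intro hs
    refine hxy (hsrc x hxv y hyv ?_ ?_)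
    · intro w hw
      exact hs (mergeV x y w) (AOE.merge_adj_iff.mpr ⟨w, x, hw, rfl, mergeV_fst x y⟩)
    · intro w hw
      exact hs (mergeV x y w) (AOE.merge_adj_iff.mpr ⟨w, y, hw, rfl, mergeV_snd x y⟩)
  refine ⟨acyclic_merge_out hac hiff, ?_, ?_, ?_⟩
  · intro p hp q hq h1 h2
    rcases hvertsH p hp with rfl | ⟨hpv, hpy⟩
    · exact absurd h1 hsrcX
    rcases hvertsH q hq with rfl | ⟨hqv, hqy⟩
    · exact absurd h2 hsrcX
    refine hsrc p hpv q hqv ?_ ?_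
    · intro w hw
      exact h1 (mergeV x y w) (AOE.merge_adj_iff.mpr ⟨w, p, hw, rfl, mergeV_of_ne x hpy⟩)
    · intro w hw
      exact h2 (mergeV x y w) (AOE.merge_adj_iff.mpr ⟨w, q, hw, rfl, mergeV_of_ne x hqy⟩)
  · intro p hp q hq h1 h2
    rcases hvertsH p hp with rfl | ⟨hpv, hpy⟩
    · exact absurd h1 hsinkX
    rcases hvertsH q hq with rfl | ⟨hqv, hqy⟩
    · exact absurd h2 hsinkX
    refine hsink p hpv q hqv ?_ ?_
    · intro w hw
      exact h1 (mergeV x y w) (AOE.merge_adj_iff.mpr ⟨p, w, hw, mergeV_of_ne x hpy, rfl⟩)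
    · intro w hw
      exact h2 (mergeV x y w) (AOE.merge_adj_iff.mpr ⟨q, w, hw, mergeV_of_ne x hqy, rfl⟩)
  -- edges
  intro p q hpq
  obtain ⟨a, b, hab, hfa, hfb⟩ := AOE.merge_unl_mem.mp hpq
  obtain ⟨hTa, hHb⟩ := hedge a b hab
  constructor
  · -- TailP H p
    rcases hTa with ⟨t, hEt⟩ | ⟨hNoIn, hUa⟩
    · refine Or.inl ⟨t, ?_⟩
      show mergeV x y (G.En t) = p
      rw [hEt, hfa]
    by_cases haxy : a = x ∨ a = y
    · by_cases hEnxy : ∃ t, G.En t = x ∨ G.En t = y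
      · obtain ⟨t, ht⟩ := hEnxy
        refine Or.inl ⟨t, ?_⟩
        show mergeV x y (G.En t) = p
        rw [mergeV_eq_x_iff.mpr ht, ← hfa, mergeV_eq_x_iff.mpr haxy]
      push_neg at hEnxy
      have hpx : p = x := by rw [← hfa, mergeV_eq_x_iff.mpr haxy]
      -- no in-unl edges into any member of {x,y} other than a
      have hOther : ∀ c, (c = x ∨ c = y) → c ≠ a → ∀ w, (w, c) ∉ G.unl := by
        intro c hcxy hca w hw
        rcases (hedge w c hw).2 with ⟨t, hSt⟩ | ⟨hNoOutc, _⟩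
        · rcases hcxy with rfl | rfl
          · exact hSx t hSt
          · exact hSy t hSt
        · have hadjcb : G.adj c b := by
            have hab' : G.adj a b := Or.inl hab
            rcases haxy with rfl | rfl <;> rcases hcxy with rfl | rfl
            · exact absurd rfl hca
            · exact (hiff b).mp hab'
            · exact (hiff b).mpr hab'
            · exact absurd rfl hca
          exact hNoOutc b hadjcb
      refine Or.inr ⟨?_, ?_⟩
      · -- NoIn H p
        intro w hw
        rcases AOE.merge_adj_iff.mp hw with ⟨w', c, hadj, _, hfc⟩
        have hcxy : c = x ∨ c = y := mergeV_eq_x_iff.mp (hfc.trans hpx)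
        by_cases hca : c = a
        · exact hNoIn w' (hca ▸ hadj)
        · rcases hadj with hu | ⟨t, _, hEt⟩
          · exact hOther c hcxy hca w' hu
          · rcases hcxy with rfl | rfl
            · exact (hEnxy t).1 hEt
            · exact (hEnxy t).2 hEt
      · intro b₁' hb₁' w' hw'
        obtain ⟨c, b₁, hcb₁, hfc, hfb₁⟩ := AOE.merge_unl_mem.mp hb₁'
        have hcxy : c = x ∨ c = y := mergeV_eq_x_iff.mp (hfc.trans hpx)
        have hUb₁ : ∀ w, (w, b₁) ∈ G.unl → w = c := by
          by_cases hca : c = a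
          · subst hca; exact hUa b₁ hcb₁
          · rcases (hedge c b₁ hcb₁).1 with ⟨t, hEt⟩ | ⟨_, hUc⟩
            · exfalso
              rcases hcxy with rfl | rfl
              · exact (hEnxy t).1 hEt
              · exact (hEnxy t).2 hEt
            · exact hUc b₁ hcb₁
        have hb₁xy : ¬(b₁ = x ∨ b₁ = y) := by
          intro hb
          by_cases hba : b₁ = a
          · exact hNoIn c (Or.inl (hba ▸ hcb₁))
          · exact hOther b₁ hb hba c hcb₁
        have hb₁x : b₁ ≠ x := fun h => hb₁xy (Or.inl h)
        have hb₁y : b₁ ≠ y := fun h => hb₁xy (Or.inr h)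
        have hfb₁' : b₁' = b₁ := by rw [← hfb₁, mergeV_of_ne x hb₁y]
        obtain ⟨w₂, b₂, h₂, hfw₂, hfb₂⟩ := AOE.merge_unl_mem.mp hw'
        have hb₂ : b₂ = b₁ := ((mergeV_eq_of_ne_x hb₁x).mp (hfb₂.trans hfb₁')).1
        have hw₂c : w₂ = c := hUb₁ w₂ (hb₂ ▸ h₂)
        rw [← hfw₂, hw₂c, hfc]
    · -- a ∉ {x,y}
      have hax : a ≠ x := fun h => haxy (Or.inl h)
      have hay : a ≠ y := fun h => haxy (Or.inr h)
      have hpa : p = a := by rw [← hfa, mergeV_of_ne x hay]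
      have hpx : p ≠ x := hpa ▸ hax
      refine Or.inr ⟨?_, ?_⟩
      · intro w hw
        rcases AOE.merge_adj_iff.mp hw with ⟨w', c, hadj, _, hfc⟩
        have hca : c = a := by
          have := (mergeV_eq_of_ne_x hpx).mp hfc
          rw [this.1, hpa]
        exact hNoIn w' (hca ▸ hadj)
      · intro b₁' hb₁' w' hw'
        obtain ⟨c, b₁, hcb₁, hfc, hfb₁⟩ := AOE.merge_unl_mem.mp hb₁'
        have hca : c = a := by
          have := (mergeV_eq_of_ne_x hpx).mp hfc
          rw [this.1, hpa]
        subst hca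
        by_cases hbxy : b₁ = x ∨ b₁ = y
        · exfalso
          rcases (hedge c b₁ hcb₁).2 with ⟨t, hSt⟩ | ⟨hNoOutb₁, _⟩
          · rcases hbxy with rfl | rfl
            · exact hSx t hSt
            · exact hSy t hSt
          · have hx : NoOut G x ∧ NoOut G y := by
              rcases hbxy with rfl | rfl
              · exact ⟨hNoOutb₁, fun w hw => hNoOutb₁ w ((hiff w).mpr hw)⟩
              · exact ⟨fun w hw => hNoOutb₁ w ((hiff w).mp hw), hNoOutb₁⟩
            exact hxy (hsink x hxv y hyv hx.1 hx.2)
        · have hb₁x : b₁ ≠ x := fun h => hbxy (Or.inl h)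
          have hb₁y : b₁ ≠ y := fun h => hbxy (Or.inr h)
          have hfb₁' : b₁' = b₁ := by rw [← hfb₁, mergeV_of_ne x hb₁y]
          obtain ⟨w₂, b₂, h₂, hfw₂, hfb₂⟩ := AOE.merge_unl_mem.mp hw'
          have hb₂ : b₂ = b₁ := ((mergeV_eq_of_ne_x hb₁x).mp (hfb₂.trans hfb₁')).1
          have hw₂c : w₂ = c := hUa b₁ hcb₁ w₂ (hb₂ ▸ h₂)
          rw [← hfw₂, hw₂c]
          exact hfc
  · -- HeadP H q
    rcases hHb with ⟨t, hSt⟩ | ⟨hNoOutb, hVb⟩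
    · refine Or.inl ⟨t, ?_⟩
      show mergeV x y (G.St t) = q
      rw [hSt, hfb]
    by_cases hbxy : b = x ∨ b = y
    · exfalso
      have hx : NoOut G x ∧ NoOut G y := by
        rcases hbxy with rfl | rfl
        · exact ⟨hNoOutb, fun w hw => hNoOutb w ((hiff w).mpr hw)⟩
        · exact ⟨fun w hw => hNoOutb w ((hiff w).mp hw), hNoOutb⟩
      exact hxy (hsink x hxv y hyv hx.1 hx.2)
    · have hbx : b ≠ x := fun h => hbxy (Or.inl h)
      have hby : b ≠ y := fun h => hbxy (Or.inr h)
      have hqb : q = b := by rw [← hfb, mergeV_of_ne x hby]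
      have hqx : q ≠ x := hqb ▸ hbx
      refine Or.inr ⟨?_, ?_⟩
      · intro w hw
        rcases AOE.merge_adj_iff.mp hw with ⟨c, w₂, hadj, hfc, _⟩
        have hcb : c = b := by
          have := (mergeV_eq_of_ne_x hqx).mp hfc
          rw [this.1, hqb]
        exact hNoOutb w₂ (hcb ▸ hadj)
      · intro a₁' ha₁' w' hw'
        obtain ⟨a₁, c, ha₁c, hfa₁, hfc⟩ := AOE.merge_unl_mem.mp ha₁'
        have hcb : c = b := by
          have := (mergeV_eq_of_ne_x hqx).mp hfc
          rw [this.1, hqb]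
        subst hcb
        have hVa₁ : ∀ w, (a₁, w) ∈ G.unl → w = c := hVb a₁ ha₁c
        obtain ⟨a₂, w₂, h₂, hfa₂, hfw₂⟩ := AOE.merge_unl_mem.mp hw'
        have hw₂c : w₂ = c := by
          rcases mergeV_fiber (hfa₂.trans hfa₁.symm) with heq | ⟨h1, h2⟩ | ⟨h1, h2⟩
          · exact hVa₁ w₂ (heq ▸ h₂)
          · -- a₂ = x, a₁ = y
            have hadj : G.adj a₁ w₂ := by
              rw [h1] at h₂; rw [h2]
              exact (hiff w₂).mp (Or.inl h₂)
            rcases hadj with hu | ⟨t, hSt, _⟩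
            · exact hVa₁ w₂ hu
            · rw [h2] at hSt; exact absurd hSt (hSy t)
          · have hadj : G.adj a₁ w₂ := by
              rw [h1] at h₂; rw [h2]
              exact (hiff w₂).mpr (Or.inl h₂)
            rcases hadj with hu | ⟨t, hSt, _⟩
            · exact hVa₁ w₂ hu
            · rw [h2] at hSt; exact absurd hSt (hSx t)
        rw [← hfw₂, hw₂c]
        exact hfb

end Rule1Out

lemma preserve_rule1in {G : AOE V T} {x y : V} (hInv : Inv G) (hc : Rule1InCond G x y) :
    Inv (G.merge x y) := by
  have h1 : Inv (G.op.merge x y) := preserve_rule1out (inv_op hInv) (r1in_to_op hc)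
  rw [← op_merge] at h1
  have h2 := inv_op h1
  rw [op_op] at h2
  exact h2


lemma preserve_rule3 {G : AOE V T} {x y : V} (hInv : Inv G) (hc : Rule3Cond G x y) :
    Inv ((G.delUnl x y).merge x y) := by
  obtain ⟨hac, hsrc, hsink, hedge⟩ := hInv
  obtain ⟨hmem, hi, hii, hiii, hiv⟩ := hc
  have hadjxy : G.adj x y := Or.inl hmem
  have hxy : x ≠ y := by
    intro h; exact hac x (Relation.TransGen.single (h ▸ hadjxy))
  have honce : (x, y) ∉ G.unl.erase (x, y) := fun h =>
    hi (Relation.TransGen.single (Or.inl h))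
  have hxv : x ∈ G.verts := (G.unlMem _ hmem).1
  have hyv : y ∈ G.verts := (G.unlMem _ hmem).2
  have hDadj : ∀ {p w : V}, p ≠ x → G.adj p w → (G.delUnl x y).adj p w := by
    intro p w hpx hw
    rcases hw with hw | hw
    · exact Or.inl ((Multiset.mem_erase_of_ne fun hh => hpx (congrArg Prod.fst hh)).mpr hw)
    · exact Or.inr hw
  have hDadj' : ∀ {p w : V}, w ≠ y → G.adj p w → (G.delUnl x y).adj p w := by
    intro p w hwy hw
    rcases hw with hw | hw
    · exact Or.inl ((Multiset.mem_erase_of_ne fun hh => hwy (congrArg Prod.snd hh)).mpr hw)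
    · exact Or.inr hw
  have hvertsH : ∀ p, p ∈ ((G.delUnl x y).merge x y).verts →
      p = x ∨ (p ∈ G.verts ∧ p ≠ y) := by
    intro p hp
    rcases Finset.mem_insert.mp hp with h | h
    · exact Or.inl h
    · exact Or.inr ⟨Finset.mem_of_mem_erase h, (Finset.mem_erase.mp h).1⟩
  refine ⟨acyclic_rule3 hac ⟨hmem, hi, hii, hiii, hiv⟩, ?_, ?_, ?_⟩
  · -- UniqSrc
    have srcNotX : ∀ p, p ≠ y → NoIn ((G.delUnl x y).merge x y) p → NoIn G p := by
      intro p hpy hs w hw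
      exact hs (mergeV x y w)
        (AOE.merge_adj_iff.mpr ⟨w, p, hDadj' hpy hw, rfl, mergeV_of_ne x hpy⟩)
    have srcX : NoIn ((G.delUnl x y).merge x y) x → NoIn G x := by
      intro hs w hw
      exact hs (mergeV x y w)
        (AOE.merge_adj_iff.mpr ⟨w, x, hDadj' hxy hw, rfl, mergeV_fst x y⟩)
    intro p hp q hq h1 h2
    by_cases hpx : p = x <;> by_cases hqx : q = x
    · rw [hpx, hqx]
    · exfalso
      rcases hvertsH q hq with h | ⟨hqv, hqy⟩
      · exact hqx h
      exact hqx (hsrc q hqv x hxv (srcNotX q hqy h2) (srcX (hpx ▸ h1)))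
    · exfalso
      rcases hvertsH p hp with h | ⟨hpv, hpy⟩
      · exact hpx h
      exact hpx (hsrc p hpv x hxv (srcNotX p hpy h1) (srcX (hqx ▸ h2)))
    · rcases hvertsH p hp with h | ⟨hpv, hpy⟩
      · exact absurd h hpx
      rcases hvertsH q hq with h | ⟨hqv, hqy⟩
      · exact absurd h hqx
      exact hsrc p hpv q hqv (srcNotX p hpy h1) (srcNotX q hqy h2)
  · -- UniqSink
    have sinkNotX : ∀ p, p ≠ x → p ≠ y → NoOut ((G.delUnl x y).merge x y) p → NoOut G p := by
      intro p hpx hpy hs w hw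
      exact hs (mergeV x y w)
          (AOE.merge_adj_iff.mpr ⟨p, w, hDadj hpx hw, mergeV_of_ne x hpy, rfl⟩)
    have sinkX : NoOut ((G.delUnl x y).merge x y) x → NoOut G y := by
      intro hs w hw
      exact hs (mergeV x y w)
        (AOE.merge_adj_iff.mpr ⟨y, w, hDadj (Ne.symm hxy) hw, mergeV_snd x y, rfl⟩)
    intro p hp q hq h1 h2
    by_cases hpx : p = x <;> by_cases hqx : q = x
    · rw [hpx, hqx]
    · exfalso
      rcases hvertsH q hq with h | ⟨hqv, hqy⟩
      · exact hqx h
      exact hqy (hsink q hqv y hyv (sinkNotX q hqx hqy h2) (sinkX (hpx ▸ h1)))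
    · exfalso
      rcases hvertsH p hp with h | ⟨hpv, hpy⟩
      · exact hpx h
      exact hpy (hsink p hpv y hyv (sinkNotX p hpx hpy h1) (sinkX (hqx ▸ h2)))
    · rcases hvertsH p hp with h | ⟨hpv, hpy⟩
      · exact absurd h hpx
      rcases hvertsH q hq with h | ⟨hqv, hqy⟩
      · exact absurd h hqx
      exact hsink p hpv q hqv (sinkNotX p hpx hpy h1) (sinkNotX q hqx hqy h2)
  -- edges
  intro p q hpq
  obtain ⟨a, b, hab, hfa, hfb⟩ := AOE.merge_unl_mem.mp hpq
  have habG : (a, b) ∈ G.unl := Multiset.mem_of_mem_erase hab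
  obtain ⟨hTa, hHb⟩ := hedge a b habG
  constructor
  · -- TailP
    rcases hTa with ⟨t, hEt⟩ | ⟨hNoIn, hUa⟩
    · refine Or.inl ⟨t, ?_⟩
      show mergeV x y (G.En t) = p
      rw [hEt, hfa]
    by_cases haxy : a = x ∨ a = y
    · have hax2 : a = x := by
        rcases haxy with rfl | rfl
        · rfl
        · exact (hNoIn x hadjxy).elim
      rw [hax2] at hNoIn hUa hab habG hfa
      by_cases hEnxy : ∃ t, G.En t = x ∨ G.En t = y
      · obtain ⟨t, ht⟩ := hEnxy
        refine Or.inl ⟨t, ?_⟩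
        show mergeV x y (G.En t) = p
        rw [mergeV_eq_x_iff.mpr ht, ← hfa, mergeV_fst]
      push_neg at hEnxy
      have hpx : p = x := by rw [← hfa, mergeV_fst]
      refine Or.inr ⟨?_, ?_⟩
      · intro w hw
        rcases AOE.merge_adj_iff.mp hw with ⟨w', c, hadjD, _, hfc⟩
        have hcxy := mergeV_eq_x_iff.mp (hfc.trans hpx)
        rcases hadjD with hu | ⟨t, _, hEt⟩
        · rcases hcxy with rfl | rfl
          · exact hNoIn w' (Or.inl (Multiset.mem_of_mem_erase hu))
          · have hwx : w' = x := hUa c hmem w' (Multiset.mem_of_mem_erase hu)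
            rw [hwx] at hu; exact honce hu
        · rcases hcxy with rfl | rfl
          · exact (hEnxy t).1 hEt
          · exact (hEnxy t).2 hEt
      · intro b₁' hb₁' w' hw'
        obtain ⟨c, b₁, hcb₁, hfc, hfb₁⟩ := AOE.merge_unl_mem.mp hb₁'
        have hcxy := mergeV_eq_x_iff.mp (hfc.trans hpx)
        have hcx : c = x := by
          rcases hcxy with rfl | rfl
          · rfl
          · exfalso
            rcases (hedge c b₁ (Multiset.mem_of_mem_erase hcb₁)).1 with
              ⟨t, hEt⟩ | ⟨hNoIny, _⟩
            · exact (hEnxy t).2 hEt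
            · exact hNoIny x hadjxy
        rw [hcx] at hcb₁
        have hcb₁G : (x, b₁) ∈ G.unl := Multiset.mem_of_mem_erase hcb₁
        have hUb₁ : ∀ w, (w, b₁) ∈ G.unl → w = x := hUa b₁ hcb₁G
        have hb₁y : b₁ ≠ y := fun h => honce (h ▸ hcb₁)
        have hb₁x : b₁ ≠ x := by
          intro h
          exact hac x (Relation.TransGen.single (Or.inl (h ▸ hcb₁G)))
        have hfb₁' : b₁' = b₁ := by rw [← hfb₁, mergeV_of_ne x hb₁y]
        obtain ⟨w₂, b₂, h₂, hfw₂, hfb₂⟩ := AOE.merge_unl_mem.mp hw'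
        have hb₂ : b₂ = b₁ := ((mergeV_eq_of_ne_x hb₁x).mp (hfb₂.trans hfb₁')).1
        have hw₂ : w₂ = x := hUb₁ w₂ (Multiset.mem_of_mem_erase (hb₂ ▸ h₂))
        rw [← hfw₂, hw₂, mergeV_fst]; exact hpx.symm
    · have hax : a ≠ x := fun h => haxy (Or.inl h)
      have hay : a ≠ y := fun h => haxy (Or.inr h)
      have hpa : p = a := by rw [← hfa, mergeV_of_ne x hay]
      have hpx : p ≠ x := hpa ▸ hax
      refine Or.inr ⟨?_, ?_⟩
      · intro w hw
        rcases AOE.merge_adj_iff.mp hw with ⟨w', c, hadjD, _, hfc⟩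
        have hca : c = a := by
          have := (mergeV_eq_of_ne_x hpx).mp hfc
          rw [this.1, hpa]
        exact hNoIn w' (hca ▸ AOE.delUnl_adj_sub hadjD)
      · intro b₁' hb₁' w' hw'
        obtain ⟨c, b₁, hcb₁, hfc, hfb₁⟩ := AOE.merge_unl_mem.mp hb₁'
        have hca : c = a := by
          have := (mergeV_eq_of_ne_x hpx).mp hfc
          rw [this.1, hpa]
        rw [hca] at hcb₁
        have hcb₁G : (a, b₁) ∈ G.unl := Multiset.mem_of_mem_erase hcb₁
        have hUb₁ : ∀ w, (w, b₁) ∈ G.unl → w = a := hUa b₁ hcb₁G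
        have hb₁y : b₁ ≠ y := by
          intro h
          exact hax (hUb₁ x (h ▸ hmem)).symm
        by_cases hb₁x : b₁ = x
        · rw [hb₁x] at hcb₁ hcb₁G hUb₁ hfb₁
          have hfb₁' : b₁' = x := by rw [← hfb₁, mergeV_fst]
          obtain ⟨w₂, b₂, h₂, hfw₂, hfb₂⟩ := AOE.merge_unl_mem.mp hw'
          have hb₂xy : b₂ = x ∨ b₂ = y :=
            mergeV_eq_x_iff.mp (hfb₂.trans hfb₁')
          rcases hb₂xy with hbb | hbb
          · rw [hbb] at h₂
            have hw₂ : w₂ = a := hUb₁ w₂ (Multiset.mem_of_mem_erase h₂)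
            rw [← hfw₂, hw₂, mergeV_of_ne x hay]; exact hpa.symm
          · rw [hbb] at h₂
            exfalso
            rcases (hedge a x hcb₁G).2 with ⟨t, hSt⟩ | ⟨hNoOutx, _⟩
            · have hw₂ : w₂ = x := (hii ⟨t, hSt⟩).2 w₂ (Multiset.mem_of_mem_erase h₂)
              rw [hw₂] at h₂; exact honce h₂
            · exact hNoOutx y hadjxy
        · have hfb₁' : b₁' = b₁ := by rw [← hfb₁, mergeV_of_ne x hb₁y]
          obtain ⟨w₂, b₂, h₂, hfw₂, hfb₂⟩ := AOE.merge_unl_mem.mp hw'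
          have hb₂ : b₂ = b₁ := ((mergeV_eq_of_ne_x hb₁x).mp (hfb₂.trans hfb₁')).1
          have hw₂ : w₂ = a := hUb₁ w₂ (Multiset.mem_of_mem_erase (hb₂ ▸ h₂))
          rw [← hfw₂, hw₂, mergeV_of_ne x hay]; exact hpa.symm
  · -- HeadP
    rcases hHb with ⟨t, hSt⟩ | ⟨hNoOutb, hVb⟩
    · refine Or.inl ⟨t, ?_⟩
      show mergeV x y (G.St t) = q
      rw [hSt, hfb]
    by_cases hbxy : b = x ∨ b = y
    · have hby2 : b = y := by
        rcases hbxy with rfl | rfl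
        · exact (hNoOutb y hadjxy).elim
        · rfl
      rw [hby2] at hNoOutb hVb hab habG hfb
      by_cases hStxy : ∃ t, G.St t = x ∨ G.St t = y
      · obtain ⟨t, ht⟩ := hStxy
        refine Or.inl ⟨t, ?_⟩
        show mergeV x y (G.St t) = q
        rw [mergeV_eq_x_iff.mpr ht, ← hfb, mergeV_snd]
      push_neg at hStxy
      have hqx : q = x := by rw [← hfb, mergeV_snd]
      refine Or.inr ⟨?_, ?_⟩
      · intro w hw
        rcases AOE.merge_adj_iff.mp hw with ⟨c, w₂, hadjD, hfc, _⟩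
        have hcxy := mergeV_eq_x_iff.mp (hfc.trans hqx)
        rcases hadjD with hu | ⟨t, hSt, _⟩
        · rcases hcxy with rfl | rfl
          · have hw₂y : w₂ = y := hVb c hmem w₂ (Multiset.mem_of_mem_erase hu)
            rw [hw₂y] at hu; exact honce hu
          · exact hNoOutb w₂ (Or.inl (Multiset.mem_of_mem_erase hu))
        · rcases hcxy with rfl | rfl
          · exact (hStxy t).1 hSt
          · exact (hStxy t).2 hSt
      · intro a₁' ha₁' w' hw'
        obtain ⟨a₁, c, ha₁c, hfa₁, hfc⟩ := AOE.merge_unl_mem.mp ha₁'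
        have hcxy := mergeV_eq_x_iff.mp (hfc.trans hqx)
        have hcy : c = y := by
          rcases hcxy with rfl | rfl
          · exfalso
            rcases (hedge a₁ c (Multiset.mem_of_mem_erase ha₁c)).2 with
              ⟨t, hSt⟩ | ⟨hNoOutx, _⟩
            · exact (hStxy t).1 hSt
            · exact hNoOutx y hadjxy
          · rfl
        rw [hcy] at ha₁c
        have ha₁cG : (a₁, y) ∈ G.unl := Multiset.mem_of_mem_erase ha₁c
        have hVa₁ : ∀ w, (a₁, w) ∈ G.unl → w = y := hVb a₁ ha₁cG
        have ha₁x : a₁ ≠ x := fun h => honce (h ▸ ha₁c)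
        have ha₁y : a₁ ≠ y := by
          intro h
          exact hac y (Relation.TransGen.single (Or.inl (h ▸ ha₁cG)))
        have hfa₁' : a₁' = a₁ := by rw [← hfa₁, mergeV_of_ne x ha₁y]
        obtain ⟨a₂, w₂, h₂, hfa₂, hfw₂⟩ := AOE.merge_unl_mem.mp hw'
        have ha₂ : a₂ = a₁ := ((mergeV_eq_of_ne_x ha₁x).mp (hfa₂.trans hfa₁')).1
        have hw₂ : w₂ = y := hVa₁ w₂ (Multiset.mem_of_mem_erase (ha₂ ▸ h₂))
        rw [← hfw₂, hw₂, mergeV_snd]; exact hqx.symm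
    · have hbx : b ≠ x := fun h => hbxy (Or.inl h)
      have hby : b ≠ y := fun h => hbxy (Or.inr h)
      have hqb : q = b := by rw [← hfb, mergeV_of_ne x hby]
      have hqx : q ≠ x := hqb ▸ hbx
      refine Or.inr ⟨?_, ?_⟩
      · intro w hw
        rcases AOE.merge_adj_iff.mp hw with ⟨c, w₂, hadjD, hfc, _⟩
        have hcb : c = b := by
          have := (mergeV_eq_of_ne_x hqx).mp hfc
          rw [this.1, hqb]
        exact hNoOutb w₂ (hcb ▸ AOE.delUnl_adj_sub hadjD)
      · intro a₁' ha₁' w' hw'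
        obtain ⟨a₁, c, ha₁c, hfa₁, hfc⟩ := AOE.merge_unl_mem.mp ha₁'
        have hcb : c = b := by
          have := (mergeV_eq_of_ne_x hqx).mp hfc
          rw [this.1, hqb]
        rw [hcb] at ha₁c
        have ha₁cG : (a₁, b) ∈ G.unl := Multiset.mem_of_mem_erase ha₁c
        have hVa₁ : ∀ w, (a₁, w) ∈ G.unl → w = b := hVb a₁ ha₁cG
        have ha₁x : a₁ ≠ x := by
          intro h
          exact hby (hVa₁ y (h ▸ hmem)).symm
        by_cases ha₁y : a₁ = y
        · rw [ha₁y] at ha₁c ha₁cG hVa₁ hfa₁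
          have hfa₁' : a₁' = x := by rw [← hfa₁, mergeV_snd]
          obtain ⟨a₂, w₂, h₂, hfa₂, hfw₂⟩ := AOE.merge_unl_mem.mp hw'
          have ha₂xy : a₂ = x ∨ a₂ = y :=
            mergeV_eq_x_iff.mp (hfa₂.trans hfa₁')
          rcases ha₂xy with haa | haa
          · rw [haa] at h₂
            exfalso
            by_cases hEny : ∃ t, G.En t = y
            · have hw₂ : w₂ = y := (hiii hEny).2 w₂ (Multiset.mem_of_mem_erase h₂)
              rw [hw₂] at h₂; exact honce h₂
            · rcases (hedge y b ha₁cG).1 with ⟨t, hEt⟩ | ⟨hNoIny, _⟩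
              · exact hEny ⟨t, hEt⟩
              · exact hNoIny x hadjxy
          · rw [haa] at h₂
            have hw₂ : w₂ = b := hVa₁ w₂ (Multiset.mem_of_mem_erase h₂)
            rw [← hfw₂, hw₂, mergeV_of_ne x hby]; exact hqb.symm
        · have hfa₁' : a₁' = a₁ := by rw [← hfa₁, mergeV_of_ne x ha₁y]
          obtain ⟨a₂, w₂, h₂, hfa₂, hfw₂⟩ := AOE.merge_unl_mem.mp hw'
          have ha₂ : a₂ = a₁ := ((mergeV_eq_of_ne_x ha₁x).mp (hfa₂.trans hfa₁')).1
          have hw₂ : w₂ = b := hVa₁ w₂ (Multiset.mem_of_mem_erase (ha₂ ▸ h₂))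
          rw [← hfw₂, hw₂, mergeV_of_ne x hby]; exact hqb.symm

lemma inv_step [Fintype T] {G H : AOE V T} (hInv : Inv G) (hs : Step G H) : Inv H := by
  cases hs with
  | rule1out u v hc => exact preserve_rule1out hInv hc
  | rule1in u v hc => exact preserve_rule1in hInv hc
  | rule2 u v hc => exact preserve_rule2 hInv hc
  | rule3 u v hc => exact preserve_rule3 hInv hc

lemma inv_reach [Fintype T] {G A : AOE V T} (hInv : Inv G)
    (h : Relation.ReflTransGen Step G A) : Inv A := by
  induction h with
  | refl => exact hInv
  | tail _ hs ih => exact inv_step ih hs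


section Canonical

variable [Fintype T]

lemma canonical_op {G : AOE V T} (h : Canonical G) : Canonical G.op := by
  obtain ⟨hac, hnd, hSinj, hEinj, hSE, s, e, hse, hsv, hev, hts, hverts, hmain, hsiff, heiff⟩ := h
  refine ⟨op_acyclic hac, hnd.map Prod.swap_injective, hEinj, hSinj,
    fun t t' => Ne.symm (hSE t' t), e, s, Ne.symm hse, hev, hsv, ?_, ?_, ?_, ?_, ?_⟩
  · intro t
    obtain ⟨h1, h2, h3, h4⟩ := hts t
    exact ⟨h4, h3, h2, h1⟩
  · show G.verts = _
    rw [hverts]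
    ext a
    show _ ↔ a ∈ insert e (insert s (Finset.image G.En Finset.univ ∪ Finset.image G.St Finset.univ))
    simp only [Finset.mem_insert, Finset.mem_union]
    tauto
  · intro a b hab ha hb
    obtain ⟨h1, h2⟩ := hmain b a (op_unl_mem.mp hab) hb ha
    exact ⟨h2, h1⟩
  · intro b
    rw [op_unl_mem]
    rw [heiff b]
    constructor
    · rintro ⟨h1, h2, h3, h4⟩
      exact ⟨h1, h2, h3, fun a ha => h4 a (op_unl_mem.mp ha)⟩
    · rintro ⟨h1, h2, h3, h4⟩
      exact ⟨h1, h2, h3, fun a ha => h4 a (op_unl_mem.mpr ha)⟩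
  · intro a
    rw [op_unl_mem]
    rw [hsiff a]
    constructor
    · rintro ⟨h1, h2, h3, h4⟩
      exact ⟨h1, h2, h3, fun b hb => h4 b (op_unl_mem.mp hb)⟩
    · rintro ⟨h1, h2, h3, h4⟩
      exact ⟨h1, h2, h3, fun b hb => h4 b (op_unl_mem.mpr hb)⟩

lemma canon_uniqSink {G : AOE V T} (h : Canonical G) : UniqSink G := by
  obtain ⟨hac, hnd, hSinj, hEinj, hSE, s, e, hse, hsv, hev, hts, hverts, hmain, hsiff, heiff⟩ := h
  have hsout : ∃ b, (s, b) ∈ G.unl := by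
    rcases isEmpty_or_nonempty T with hT | hT
    · refine ⟨e, (hsiff e).mpr ⟨hev, Ne.symm hse, fun t => (hT.elim t), ?_⟩⟩
      intro a ha
      have hav : a ∈ G.verts := (G.unlMem _ ha).1
      rw [hverts] at hav
      simp only [Finset.univ_eq_empty, Finset.image_empty, Finset.empty_union,
        Finset.mem_insert] at hav
      rcases hav with rfl | hav
      · rfl
      · exfalso
        have : a = e := by simpa using hav
        rw [this] at ha
        exact ((heiff e).mp ha).2.1 rfl
    · have hwf : WellFounded (fun t' t : T => Relation.TransGen G.adj (G.St t') (G.St t)) := by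
        haveI : IsTrans T (fun t' t : T => Relation.TransGen G.adj (G.St t') (G.St t)) :=
          ⟨fun _ _ _ h1 h2 => h1.trans h2⟩
        haveI : IsIrrefl T (fun t' t : T => Relation.TransGen G.adj (G.St t') (G.St t)) :=
          ⟨fun t ht => hac _ ht⟩
        exact Finite.wellFounded_of_trans_of_irrefl _
      haveI := hT
      obtain ⟨t₀, -, hmin⟩ := hwf.has_min Set.univ Set.univ_nonempty
      refine ⟨G.St t₀, (hsiff _).mpr ⟨G.stMem t₀, (hts t₀).1, fun t' => Ne.symm (hSE t₀ t'), ?_⟩⟩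
      intro a ha
      by_contra has
      obtain ⟨⟨t', hEt'⟩, -⟩ := hmain a (G.St t₀) ha has (hts t₀).2.1
      rw [← hEt'] at ha
      have h1 : Relation.TransGen G.adj (G.St t') (G.En t') :=
        Relation.TransGen.single (Or.inr ⟨t', rfl, rfl⟩)
      exact hmin t' (Set.mem_univ t') (h1.tail (Or.inl ha))
  have key : ∀ r ∈ G.verts, NoOut G r → r = e := by
    intro r hr hNoOut
    rw [hverts] at hr
    rcases Finset.mem_insert.mp hr with rfl | hr
    · obtain ⟨b, hb⟩ := hsout
      exact (hNoOut b (Or.inl hb)).elim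
    rcases Finset.mem_insert.mp hr with rfl | hr
    · rfl
    rcases Finset.mem_union.mp hr with hr | hr
    · obtain ⟨t, -, rfl⟩ := Finset.mem_image.mp hr
      exact (hNoOut (G.En t) (Or.inr ⟨t, rfl, rfl⟩)).elim
    · obtain ⟨t, -, rfl⟩ := Finset.mem_image.mp hr
      have hEe : (G.En t, e) ∈ G.unl := (heiff _).mpr ⟨G.enMem t, (hts t).2.2.2,
        fun t' h' => (hNoOut (G.En t') (Or.inr ⟨t', h', rfl⟩)),
        fun b hb => ((hNoOut b (Or.inl hb)).elim)⟩
      exact (hNoOut e (Or.inl hEe)).elim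
  intro p hp q hq h1 h2
  rw [key p hp h1, key q hq h2]

lemma canon_tailP {G : AOE V T} (h : Canonical G) {a b : V} (hab : (a, b) ∈ G.unl) :
    TailP G a := by
  obtain ⟨hac, hnd, hSinj, hEinj, hSE, s, e, hse, hsv, hev, hts, hverts, hmain, hsiff, heiff⟩ := h
  by_cases has : a = s
  · refine Or.inr ⟨?_, ?_⟩
    · intro w hw
      rcases hw with hu | ⟨t, _, hEt⟩
      · by_cases hws : w = s
        · rw [hws, has] at hu
          exact ((hsiff s).mp hu).2.1 rfl
        · rw [has] at hu
          by_cases hae : s = e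
          · exact hse hae
          · obtain ⟨-, t', hSt'⟩ := hmain w s hu hws hae
            exact (hts t').1 hSt'
      · rw [has] at hEt
        exact (hts t).2.2.1 hEt
    · intro b' hb' w hw
      rw [has] at hb'
      have hws := ((hsiff b').mp hb').2.2.2 w hw
      rw [hws, has]
  · left
    have hav : a ∈ G.verts := (G.unlMem _ hab).1
    rw [hverts] at hav
    rcases Finset.mem_insert.mp hav with rfl | hav
    · exact absurd rfl has
    rcases Finset.mem_insert.mp hav with rfl | hav
    · exfalso
      by_cases hbe : b = a
      · rw [hbe] at hab
        exact ((heiff a).mp hab).2.1 rfl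
      · obtain ⟨⟨t, hEt⟩, -⟩ := hmain a b hab has hbe
        exact (hts t).2.2.2 hEt
    rcases Finset.mem_union.mp hav with hav | hav
    · exfalso
      obtain ⟨t, -, rfl⟩ := Finset.mem_image.mp hav
      by_cases hbe : b = e
      · rw [hbe] at hab
        exact ((heiff _).mp hab).2.2.1 t rfl
      · obtain ⟨⟨t', hEt'⟩, -⟩ := hmain _ b hab has hbe
        exact hSE t t' hEt'.symm
    · obtain ⟨t, -, rfl⟩ := Finset.mem_image.mp hav
      exact ⟨t, rfl⟩

lemma canon_inv {G : AOE V T} (h : Canonical G) : Inv G := by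
  refine ⟨h.1, ?_, canon_uniqSink h, ?_⟩
  · intro p hp q hq h1 h2
    exact canon_uniqSink (canonical_op h) p hp q hq (noOut_op.mpr h1) (noOut_op.mpr h2)
  · intro a b hab
    refine ⟨canon_tailP h hab, ?_⟩
    exact tailP_op.mp (canon_tailP (canonical_op h) (op_unl_mem.mpr hab))

end Canonical


lemma terminal_tail [Fintype T] {A : AOE V T} (hInv : Inv A)
    (hterm : ∀ B : AOE V T, ¬ Step A B) {u v : V} (huv : (u, v) ∈ A.unl) :
    ∃ t, A.En t = u := by
  by_contra hno
  obtain ⟨hac, hsrc, hsink, hedge⟩ := hInv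
  rcases (hedge u v huv).1 with h | ⟨hNoIn, hU⟩
  · exact hno h
  have huV : u ∈ A.verts := (A.unlMem _ huv).1
  -- every vertex is reachable from u
  have hreach : ∀ z ∈ A.verts, Relation.ReflTransGen A.adj u z := by
    have hwf : WellFounded (fun p q : {z // z ∈ A.verts} =>
        Relation.TransGen A.adj p.1 q.1) := by
      haveI : IsTrans {z // z ∈ A.verts}
          (fun p q => Relation.TransGen A.adj p.1 q.1) :=
        ⟨fun _ _ _ h1 h2 => h1.trans h2⟩
      haveI : IsIrrefl {z // z ∈ A.verts}
          (fun p q => Relation.TransGen A.adj p.1 q.1) :=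
        ⟨fun p hp => hac _ hp⟩
      exact Finite.wellFounded_of_trans_of_irrefl _
    have main : ∀ p : {z // z ∈ A.verts}, Relation.ReflTransGen A.adj u p.1 := by
      intro p
      refine hwf.induction (C := fun p => Relation.ReflTransGen A.adj u p.1) p ?_
      intro p ih
      by_cases hz : ∃ w, A.adj w p.1
      · obtain ⟨w, hw⟩ := hz
        have hwV : w ∈ A.verts := AOE.adj_mem_left hw
        exact (ih ⟨w, hwV⟩ (Relation.TransGen.single hw)).tail hw
      · push_neg at hz
        by_cases hup : u = p.1
        · exact hup ▸ Relation.ReflTransGen.refl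
        · exfalso
          refine hterm _ (Step.rule1in u p.1 ⟨huV, p.2, hup, ?_, ?_, ?_⟩)
          · exact fun t ht => hNoIn (A.St t) (Or.inr ⟨t, rfl, ht⟩)
          · exact fun t ht => hz (A.St t) (Or.inr ⟨t, rfl, ht⟩)
          · exact fun w => iff_of_false (fun hw => hNoIn w hw) (hz w)
    intro z hz
    exact main ⟨z, hz⟩
  have honce : (u, v) ∉ A.unl.erase (u, v) := by
    intro hmem
    exact hterm _ (Step.rule2 u v ⟨huv, Relation.TransGen.single (Or.inl hmem)⟩)
  have transfer : ∀ c w, c ≠ u → Relation.ReflTransGen A.adj c w →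
      Relation.ReflTransGen (A.delUnl u v).adj c w := by
    intro c w hcu h
    induction h with
    | refl => exact Relation.ReflTransGen.refl
    | @tail m w' hcm hmw ih =>
      have hmu : m ≠ u := by
        intro hh
        rw [hh] at hcm
        rcases Relation.ReflTransGen.cases_tail hcm with heq | ⟨d, _, hdu⟩
        · exact hcu heq.symm
        · exact hNoIn d hdu
      refine ih.tail ?_
      rcases hmw with hu | ht
      · exact Or.inl ((Multiset.mem_erase_of_ne fun hh => hmu (congrArg Prod.fst hh)).mpr hu)
      · exact Or.inr ht
  have hnoEnv : ∀ t, A.En t ≠ v := by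
    intro W hW
    have hr : Relation.ReflTransGen A.adj u (A.St W) := hreach _ (A.stMem W)
    rcases Relation.ReflTransGen.cases_head hr with heq | ⟨c, huc, hcw⟩
    · exact hterm _ (Step.rule2 u v
        ⟨huv, Relation.TransGen.single (Or.inr ⟨W, heq.symm, hW⟩)⟩)
    · have hcu : c ≠ u := by
        intro hh
        rw [hh] at huc
        exact hac u (Relation.TransGen.single huc)
      have hcv : c ≠ v := by
        intro hh
        rw [hh] at hcw
        exact hac v (Relation.TransGen.tail' hcw (Or.inr ⟨W, rfl, hW⟩))
      have first : (A.delUnl u v).adj u c := by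
        rcases huc with hu | ht
        · exact Or.inl ((Multiset.mem_erase_of_ne fun hh => hcv (congrArg Prod.snd hh)).mpr hu)
        · exact Or.inr ht
      have hlast : (A.delUnl u v).adj (A.St W) v := Or.inr ⟨W, rfl, hW⟩
      have hpath := (transfer c _ hcu hcw).tail hlast
      exact hterm _ (Step.rule2 u v ⟨huv, Relation.TransGen.head' first hpath⟩)
  have hUv : ∀ w, (w, v) ∈ A.unl → w = u := hU v huv
  refine hterm _ (Step.rule3 u v ⟨huv, ?_, ?_, ?_, ?_⟩)
  · intro htg
    obtain ⟨m, _, hmv⟩ := Relation.TransGen.tail'_iff.mp htg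
    rcases hmv with hu | ⟨t, _, hEt⟩
    · have hmu : m = u := hUv m (Multiset.mem_of_mem_erase hu)
      rw [hmu] at hu
      exact honce hu
    · exact hnoEnv t hEt
  · intro _
    exact ⟨hnoEnv, hUv⟩
  · rintro ⟨t, hEt⟩
    exact (hnoEnv t hEt).elim
  · intro w z hwv huz
    have hwu : w = u := by
      rcases hwv with hu | ⟨t, _, hEt⟩
      · exact hUv w hu
      · exact (hnoEnv t hEt).elim
    rw [hwu]
    exact Relation.ReflTransGen.single huz

end Stmt7Aux

/-- In any output AOE, every unlabeled edge `(u, v)` goes from the end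
vertex of some task to the start vertex of some task. -/
theorem stmt7 {V T : Type} [DecidableEq V] [Fintype T] (G A : AOE V T)
    (h : IsOutput G A) :
    ∀ u v : V, (u, v) ∈ A.unl → (∃ t, A.En t = u) ∧ ∃ t', A.St t' = v := by
  obtain ⟨hG, hsteps, hterm⟩ := h
  have hInvA : Inv A := inv_reach (canon_inv hG) hsteps
  intro u v huv
  refine ⟨terminal_tail hInvA hterm huv, ?_⟩
  exact terminal_tail (inv_op hInvA) (noStep_op hterm) (op_unl_mem.mpr huv)

end AOEPaper
end
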